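/- Let g₁(q) = ⟨q, x₁⟩ if ‖q‖* ≤ α₁ and +∞ otherwise, and g₂(q) = ⟨q, x₂⟩ if ‖q‖* ≤ α₂ and +∞ otherwise, where ‖·‖* is the dual norm. Then the infimal convolution evaluated at 0 satisfies (g₁ □ g₂)(0) = -min(α₁, α₂)·‖x₁ - x₂‖. -/

import Mathlib

/-- Infimal convolution at 0 of two linear functions with bounded-dual-norm domains. -/
theorem stmt_7 {E : Type*} [NormedAddCommGroup E] [NormedSpace ℝ E]
    (x₁ x₂ : E) (α₁ α₂ : ℝ) (hα₁ : 0 < α₁) (hα₂ : 0 < α₂)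
    (g₁ g₂ : (E →L[ℝ] ℝ) → EReal)
    (hg₁ : ∀ q : E →L[ℝ] ℝ, g₁ q = if ‖q‖ ≤ α₁ then ((q x₁ : ℝ) : EReal) else ⊤)
    (hg₂ : ∀ q : E →L[ℝ] ℝ, g₂ q = if ‖q‖ ≤ α₂ then ((q x₂ : ℝ) : EReal) else ⊤) :
    (⨅ q : E →L[ℝ] ℝ, g₁ q + g₂ (-q)) =
      ((-(min α₁ α₂ * ‖x₁ - x₂‖) : ℝ) : EReal) := by
  set m := min α₁ α₂ with hm
  have hm0 : 0 < m := lt_min hα₁ hα₂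
  apply le_antisymm
  · -- inf ≤ value, via a witness
    rcases eq_or_ne x₁ x₂ with h | h
    · have h0 : ((⨅ q : E →L[ℝ] ℝ, g₁ q + g₂ (-q)) : EReal) ≤ g₁ 0 + g₂ (-0) :=
        iInf_le _ 0
      refine h0.trans_eq ?_
      rw [hg₁, hg₂]
      simp [h, hα₁.le, hα₂.le, sub_self]
    · obtain ⟨g, hg, hgx⟩ := exists_dual_vector ℝ (x₁ - x₂) (norm_ne_zero_iff.mpr (sub_ne_zero.mpr h))
      set q : E →L[ℝ] ℝ := (-m) • g with hq
      have hqnorm : ‖q‖ = m := by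
        simp [hq, norm_smul, hg, abs_of_pos hm0]
      have h1 : ‖q‖ ≤ α₁ := hqnorm.le.trans (min_le_left _ _)
      have h2 : ‖-q‖ ≤ α₂ := by
        rw [norm_neg]; exact hqnorm.le.trans (min_le_right _ _)
      have hgx' : g (x₁ - x₂) = ‖x₁ - x₂‖ := by simpa using hgx
      have hval : q x₁ + (-q) x₂ = -(m * ‖x₁ - x₂‖) := by
        have e1 : q x₁ + (-q) x₂ = q (x₁ - x₂) := by
          simp [map_sub]; ring
        rw [e1, hq]
        simp [hgx']
      have h0 : ((⨅ p : E →L[ℝ] ℝ, g₁ p + g₂ (-p)) : EReal) ≤ g₁ q + g₂ (-q) :=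
        iInf_le _ q
      refine h0.trans_eq ?_
      rw [hg₁, hg₂, if_pos h1, if_pos h2, ← EReal.coe_add, hval]
  · refine le_iInf fun q => ?_
    rw [hg₁, hg₂]
    split_ifs with h1 h2
    · rw [← EReal.coe_add, EReal.coe_le_coe_iff]
      have hq2 : ‖q‖ ≤ α₂ := by rwa [← norm_neg q]
      have hqm : ‖q‖ ≤ m := le_min h1 hq2
      have key : q x₁ + (-q) x₂ = q (x₁ - x₂) := by simp [map_sub]; ring
      rw [key]
      have hb : |q (x₁ - x₂)| ≤ ‖q‖ * ‖x₁ - x₂‖ := by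
        simpa [Real.norm_eq_abs] using q.le_opNorm (x₁ - x₂)
      nlinarith [neg_abs_le (q (x₁ - x₂)), norm_nonneg (x₁ - x₂)]
    · rw [EReal.coe_add_top]; exact le_top
    · rw [EReal.top_add_coe]; exact le_top
    · rw [EReal.top_add_top]; exact le_top
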